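/- Let p be a prime and G a finite p-group having a maximal subgroup M such that d(G) = 1 + d(M). Then the Frattini subgroups coincide: Φ(G) = Φ(M). -/

import Mathlib

open Subgroup
open scoped commutatorElement

lemma mem_frattini_iff' {G : Type*} [Group G] {x : G} :
    x ∈ frattini G ↔ ∀ K : Subgroup G, IsCoatom K → x ∈ K := by
  simp [frattini, Order.radical, Subgroup.mem_iInf, Set.mem_setOf_eq]

/-- A coatom of a finite p-group is normal of index p. -/
lemma coatom_normal_index {p : ℕ} (hp : p.Prime) {G : Type*} [Group G] [Finite G]
    (hG : IsPGroup p G) {K : Subgroup G} (hK : IsCoatom K) : K.Normal ∧ K.index = p := by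
  haveI : Fact p.Prime := ⟨hp⟩
  haveI hnil : Group.IsNilpotent G := hG.isNilpotent
  haveI hn : K.Normal := Subgroup.NormalizerCondition.normal_of_coatom K
    normalizerCondition_of_isNilpotent hK
  refine ⟨hn, ?_⟩
  obtain ⟨k, hk⟩ := (IsPGroup.iff_card.mp (hG.to_quotient K))
  have hk1 : k ≠ 0 := by
    rintro rfl
    rw [pow_zero, ← Subgroup.index_eq_card, Subgroup.index_eq_one] at hk
    exact hK.1 hk
  obtain ⟨H, hH⟩ := Sylow.exists_subgroup_card_pow_prime (G := G ⧸ K) p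
    (n := 1) (by rw [hk]; exact pow_dvd_pow p (Nat.one_le_iff_ne_zero.mpr hk1))
  have hmapK : map (QuotientGroup.mk' K) K = ⊥ := by
    rw [eq_bot_iff]
    rintro y ⟨x, hx, rfl⟩
    simp [(QuotientGroup.eq_one_iff x).mpr hx]
  have hcomap : K ≤ comap (QuotientGroup.mk' K) H := by
    intro x hx
    simp only [Subgroup.mem_comap, QuotientGroup.mk'_apply,
      (QuotientGroup.eq_one_iff x).mpr hx]
    exact H.one_mem
  have hself := Subgroup.map_comap_eq_self_of_surjective
    (QuotientGroup.mk'_surjective K) H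
  have htop : comap (QuotientGroup.mk' K) H = ⊤ := by
    rcases eq_or_lt_of_le hcomap with heq | hlt
    · exfalso
      rw [← heq, hmapK] at hself
      rw [← hself, Subgroup.card_bot] at hH
      rw [pow_one] at hH
      exact hp.one_lt.ne' hH.symm
    · exact hK.2 _ hlt
  have hHtop : H = ⊤ := by rw [← hself, htop, Subgroup.map_top_of_surjective _
    (QuotientGroup.mk'_surjective K)]
  rw [pow_one] at hH
  rw [Subgroup.index_eq_card, ← hH, hHtop, Nat.card_congr Subgroup.topEquiv.toEquiv]

/-- In a finite p-group, p-th powers and commutators lie in every coatom,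
hence in the Frattini subgroup. -/
lemma pow_mem_frattini {p : ℕ} (hp : p.Prime) {G : Type*} [Group G] [Finite G]
    (hG : IsPGroup p G) (x : G) : x ^ p ∈ frattini G := by
  rw [mem_frattini_iff']
  intro K hK
  obtain ⟨hn, hi⟩ := coatom_normal_index hp hG hK
  have := Subgroup.pow_index_mem K x
  rwa [hi] at this

lemma commutator_mem_frattini {p : ℕ} (hp : p.Prime) {G : Type*} [Group G] [Finite G]
    (hG : IsPGroup p G) (x y : G) : ⁅x, y⁆ ∈ frattini G := by
  rw [mem_frattini_iff']
  intro K hK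
  obtain ⟨hn, hi⟩ := coatom_normal_index hp hG hK
  haveI : Fact p.Prime := ⟨hp⟩
  have hcard : Nat.card (G ⧸ K) = p := by rw [← Subgroup.index_eq_card, hi]
  haveI := isCyclic_of_prime_card hcard
  rw [← QuotientGroup.eq_one_iff, ← QuotientGroup.mk'_apply, map_commutatorElement]
  exact commutatorElement_eq_one_iff_mul_comm.mpr
    (IsCyclic.commGroup.mul_comm _ _)

/-- In a finite elementary abelian p-group, any nontrivial element avoids some coatom. -/
lemma exists_coatom_not_mem {p : ℕ} (hp : p.Prime) {Q : Type*} [CommGroup Q] [Finite Q]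
    (hpow : ∀ a : Q, a ^ p = 1) {g : Q} (hg : g ≠ 1) :
    ∃ H : Subgroup Q, IsCoatom H ∧ g ∉ H := by
  have hS : ({H : Subgroup Q | g ∉ H} : Set (Subgroup Q)).Finite := Set.toFinite _
  have hne : (⊥ : Subgroup Q) ∈ {H : Subgroup Q | g ∉ H} := by
    simp [Subgroup.mem_bot, hg]
  obtain ⟨H, hHmem, hHmax'⟩ := hS.exists_maximal ⟨⊥, hne⟩
  have hHmax : ∀ K ∈ ({H : Subgroup Q | g ∉ H} : Set (Subgroup Q)), H ≤ K → H = K :=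
    fun K hK hle => le_antisymm hle (hHmax' hK hle)
  simp only [id_eq, Set.mem_setOf_eq] at hHmem hHmax
  have key : ∀ K : Subgroup Q, H < K → g ∈ K := by
    intro K hK
    by_contra hgK
    exact hK.ne (hHmax K hgK hK.le)
  refine ⟨H, ⟨fun htop => hHmem (htop ▸ Subgroup.mem_top g), fun K hK => ?_⟩, hHmem⟩
  have hgK : g ∈ K := key K hK
  rw [eq_top_iff]
  intro y _
  by_contra hyK
  have hyH : y ∉ H := fun h => hyK (hK.le h)
  have hlt : H < H ⊔ Subgroup.zpowers y :=
    lt_of_le_of_ne le_sup_left (fun h => hyH (h ▸ Subgroup.mem_sup_right (Subgroup.mem_zpowers y)))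
  obtain ⟨h, hh, z, hz, hzy⟩ := Subgroup.mem_sup.mp (key _ hlt)
  obtain ⟨k, rfl⟩ := Subgroup.mem_zpowers_iff.mp hz
  -- y^k = h⁻¹ * g
  have hyk : y ^ k = h⁻¹ * g := by rw [← hzy]; group
  have hply : y ^ (p : ℤ) = 1 := by rw [zpow_natCast, hpow]
  have hpk : ¬ (p : ℤ) ∣ k := by
    rintro ⟨m, rfl⟩
    apply hHmem
    have : y ^ ((p : ℤ) * m) = 1 := by rw [zpow_mul, hply, one_zpow]
    rw [this] at hyk
    have : g = h := by rw [eq_comm, ← inv_mul_eq_one]; rw [← hyk]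
    exact this ▸ hh
  have hcop : IsCoprime k (p : ℤ) := by
    have hnd : ¬ p ∣ k.natAbs := by
      rw [← Int.natAbs_natCast p, Int.natAbs_dvd_natAbs]
      exact hpk
    rw [Int.isCoprime_iff_gcd_eq_one]
    have : Int.gcd k (p : ℤ) = Nat.gcd k.natAbs p := by
      simp [Int.gcd]
    rw [this]
    exact Nat.coprime_comm.mp (hp.coprime_iff_not_dvd.mpr hnd)
  obtain ⟨a, b, hab⟩ := hcop
  have : y = (y ^ k) ^ a * (y ^ (p : ℤ)) ^ b := by
    rw [← zpow_mul, ← zpow_mul, ← zpow_add, mul_comm k a, mul_comm (p:ℤ) b, hab, zpow_one]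
  rw [hply, one_zpow, mul_one, hyk] at this
  exact hyK (this ▸ K.zpow_mem (K.mul_mem (K.inv_mem (hK.le hh)) hgK) a)

/-- If `G/N` is elementary abelian then `frattini G ≤ N`. -/
lemma frattini_le_of_elementary {p : ℕ} (hp : p.Prime) {G : Type*} [Group G] [Finite G]
    (N : Subgroup G) [N.Normal] (hc : ∀ a b : G, ⁅a, b⁆ ∈ N) (hpw : ∀ a : G, a ^ p ∈ N) :
    frattini G ≤ N := by
  intro x hx
  by_contra hxN
  letI : CommGroup (G ⧸ N) :=
    { (inferInstance : Group (G ⧸ N)) with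
      mul_comm := by
        intro a b
        induction a using QuotientGroup.induction_on with
        | H a =>
        induction b using QuotientGroup.induction_on with
        | H b =>
        have : ((⁅a, b⁆ : G) : G ⧸ N) = 1 := (QuotientGroup.eq_one_iff _).mpr (hc a b)
        rw [← QuotientGroup.mk'_apply, map_commutatorElement] at this
        exact commutatorElement_eq_one_iff_mul_comm.mp this }
  have hpow : ∀ a : G ⧸ N, a ^ p = 1 := by
    intro a
    induction a using QuotientGroup.induction_on with
    | H a =>
    have : ((a ^ p : G) : G ⧸ N) = 1 := (QuotientGroup.eq_one_iff _).mpr (hpw a)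
    rwa [← QuotientGroup.mk'_apply, map_pow, QuotientGroup.mk'_apply] at this
  have hg : ((x : G ⧸ N)) ≠ 1 := fun h => hxN ((QuotientGroup.eq_one_iff _).mp h)
  obtain ⟨H, hH, hgH⟩ := exists_coatom_not_mem hp hpow hg
  exact hgH (frattini_le_coatom
    (Subgroup.isCoatom_comap_of_surjective (QuotientGroup.mk'_surjective N) hH) hx)

/-- Lift a generating set of the quotient. -/
lemma exists_lift_gen {G : Type*} [Group G] [Finite G] [DecidableEq G] (N : Subgroup G) [N.Normal] :
    ∃ T : Finset G, T.card ≤ Group.rank (G ⧸ N) ∧ Subgroup.closure (T : Set G) ⊔ N = ⊤ := by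
  obtain ⟨S, hScard, hSgen⟩ := Group.rank_spec (G ⧸ N)
  refine ⟨S.image Quotient.out, (Finset.card_image_le).trans_eq hScard, ?_⟩
  have hmap : Subgroup.map (QuotientGroup.mk' N)
      (Subgroup.closure ((S.image Quotient.out : Finset G) : Set G)) = ⊤ := by
    rw [MonoidHom.map_closure]
    rw [eq_top_iff, ← hSgen]
    apply Subgroup.closure_mono
    intro s hs
    refine ⟨s.out, ?_, ?_⟩
    · simp only [Finset.coe_image, Set.mem_image]
      exact ⟨s, hs, rfl⟩
    · exact QuotientGroup.out_eq' s
  have := Subgroup.comap_map_eq (QuotientGroup.mk' N)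
    (Subgroup.closure ((S.image Quotient.out : Finset G) : Set G))
  rw [hmap, QuotientGroup.ker_mk'] at this
  rw [← this, Subgroup.comap_top]

lemma rank_le_of_card_pow {p : ℕ} (hp : p.Prime) :
    ∀ n : ℕ, ∀ (Q : Type) [Group Q] [Finite Q], (∀ a b : Q, a * b = b * a) →
      (∀ a : Q, a ^ p = 1) → Nat.card Q = p ^ n → Group.rank Q ≤ n := by
  intro n
  induction n with
  | zero =>
    intro Q _ _ hc hpw hcard
    rw [pow_zero] at hcard
    haveI : Subsingleton Q := (Nat.card_eq_one_iff_unique.mp hcard).1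
    have hgen : Subgroup.closure ((∅ : Finset Q) : Set Q) = ⊤ := by
      rw [eq_top_iff]
      intro y _
      have : y = 1 := Subsingleton.elim _ _
      rw [this]
      exact Subgroup.one_mem _
    simpa using Group.rank_le hgen
  | succ n ih =>
    intro Q _ _ hc hpw hcard
    classical
    have hnt : Nontrivial Q := by
      rw [← Finite.one_lt_card_iff_nontrivial, hcard]
      exact Nat.one_lt_pow (Nat.succ_ne_zero n) hp.one_lt
    obtain ⟨x, hx⟩ := exists_ne (1 : Q)
    have hox : orderOf x = p := by
      rcases (Nat.Prime.eq_one_or_self_of_dvd hp _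
        (orderOf_dvd_of_pow_eq_one (hpw x))) with h | h
      · exact absurd (orderOf_eq_one_iff.mp h) hx
      · exact h
    haveI hZn : (Subgroup.zpowers x).Normal := by
      refine ⟨fun a ha g => ?_⟩
      have : g * a * g⁻¹ = a := by rw [hc g a, mul_assoc, mul_inv_cancel, mul_one]
      rwa [this]
    have hcard' : Nat.card (Q ⧸ Subgroup.zpowers x) = p ^ n := by
      have h1 := Subgroup.card_eq_card_quotient_mul_card_subgroup (Subgroup.zpowers x)
      rw [Nat.card_zpowers, hox, hcard, pow_succ] at h1
      exact (Nat.eq_of_mul_eq_mul_right hp.pos h1.symm)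
    have hc' : ∀ a b : Q ⧸ Subgroup.zpowers x, a * b = b * a := by
      intro a b
      induction a using QuotientGroup.induction_on with
      | H a =>
      induction b using QuotientGroup.induction_on with
      | H b =>
      rw [← QuotientGroup.mk_mul, ← QuotientGroup.mk_mul, hc a b]
    have hpw' : ∀ a : Q ⧸ Subgroup.zpowers x, a ^ p = 1 := by
      intro a
      induction a using QuotientGroup.induction_on with
      | H a =>
      rw [← QuotientGroup.mk_pow, hpw a, QuotientGroup.mk_one]
    have hrk' := ih (Q ⧸ Subgroup.zpowers x) hc' hpw' hcard'
    obtain ⟨T, hTcard, hTgen⟩ := exists_lift_gen (Subgroup.zpowers x)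
    have hgen : Subgroup.closure ((insert x T : Finset Q) : Set Q) = ⊤ := by
      rw [Finset.coe_insert, Set.insert_eq, Subgroup.closure_union,
        ← Subgroup.zpowers_eq_closure, sup_comm]
      exact hTgen
    calc Group.rank Q ≤ (insert x T).card := Group.rank_le hgen
      _ ≤ T.card + 1 := Finset.card_insert_le _ _
      _ ≤ n + 1 := by omega

/-- Burnside basis theorem (cardinality form) for finite `p`-groups. -/
lemma card_frattini_mul_pow_rank {p : ℕ} (hp : p.Prime) (G : Type) [Group G] [Finite G]
    (hG : IsPGroup p G) :
    Nat.card G = Nat.card (frattini G) * p ^ Group.rank G := by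
  classical
  haveI : Fact p.Prime := ⟨hp⟩
  obtain ⟨n, hn⟩ := IsPGroup.iff_card.mp (hG.to_quotient (frattini G))
  letI : CommGroup (G ⧸ frattini G) :=
    { (inferInstance : Group (G ⧸ frattini G)) with
      mul_comm := by
        intro a b
        induction a using QuotientGroup.induction_on with
        | H a =>
        induction b using QuotientGroup.induction_on with
        | H b =>
        have : ((⁅a, b⁆ : G) : G ⧸ frattini G) = 1 :=
          (QuotientGroup.eq_one_iff _).mpr (commutator_mem_frattini hp hG a b)
        rw [← QuotientGroup.mk'_apply, map_commutatorElement] at this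
        exact commutatorElement_eq_one_iff_mul_comm.mp this }
  have hc' : ∀ a b : G ⧸ frattini G, a * b = b * a := mul_comm
  have hpw' : ∀ a : G ⧸ frattini G, a ^ p = 1 := by
    intro a
    induction a using QuotientGroup.induction_on with
    | H a =>
    rw [← QuotientGroup.mk_pow, (QuotientGroup.eq_one_iff _).mpr (pow_mem_frattini hp hG a)]
  have hrank_eq : Group.rank G = Group.rank (G ⧸ frattini G) := by
    apply le_antisymm
    · obtain ⟨T, hTcard, hTgen⟩ := exists_lift_gen (frattini G)
      have htop := frattini_nongenerating hTgen
      exact (Group.rank_le htop).trans hTcard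
    · exact Group.rank_le_of_surjective (QuotientGroup.mk' _) (QuotientGroup.mk'_surjective _)
  have hle : Group.rank (G ⧸ frattini G) ≤ n := rank_le_of_card_pow hp n _ hc' hpw' hn
  have hge : n ≤ Group.rank (G ⧸ frattini G) := by
    have hdvd := card_dvd_exponent_pow_rank' (G ⧸ frattini G) hpw'
    rw [hn] at hdvd
    exact (Nat.pow_dvd_pow_iff_le_right hp.one_lt).mp hdvd
  have hq : Nat.card (G ⧸ frattini G) = p ^ Group.rank G := by
    rw [hn, hrank_eq, le_antisymm hle hge]
  have hlag := Subgroup.card_eq_card_quotient_mul_card_subgroup (frattini G)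
  rw [hq] at hlag
  rw [hlag, mul_comm]

/-- If a finite `p`-group `G` has a maximal subgroup `M` with
`d(G) = 1 + d(M)`, then the Frattini subgroups of `G` and of `M` coincide
(the Frattini subgroup of `M`, viewed inside `G`, equals that of `G`). -/
theorem frattini_eq_frattini_of_maximal_rank
    (p : ℕ) (hp : p.Prime) (G : Type) [Group G] [Finite G] (hpG : IsPGroup p G)
    (M : Subgroup G) (hM : IsCoatom M)
    (hd : Group.rank G = 1 + Group.rank ↥M) :
    Subgroup.map M.subtype (frattini ↥M) = frattini G := by
  classical
  haveI : Fact p.Prime := ⟨hp⟩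
  have hFM : frattini G ≤ M := frattini_le_coatom hM
  have hMp : IsPGroup p ↥M := hpG.to_subgroup M
  set N : Subgroup ↥M := (frattini G).subgroupOf M with hN
  haveI : N.Normal := Subgroup.normal_subgroupOf
  have hsub : frattini ↥M ≤ N := by
    apply frattini_le_of_elementary hp N
    · intro a b
      rw [hN, Subgroup.mem_subgroupOf]
      exact commutator_mem_frattini hp hpG (a : G) (b : G)
    · intro a
      rw [hN, Subgroup.mem_subgroupOf]
      exact pow_mem_frattini hp hpG (a : G)
  obtain ⟨-, hip⟩ := coatom_normal_index hp hpG hM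
  have hcG := card_frattini_mul_pow_rank hp G hpG
  have hcM := card_frattini_mul_pow_rank hp ↥M hMp
  have hlagM : Nat.card G = Nat.card ↥M * p := by
    have h := Subgroup.card_eq_card_quotient_mul_card_subgroup M
    rw [← Subgroup.index_eq_card, hip] at h
    rw [h, mul_comm]
  have hcards : Nat.card (frattini G) = Nat.card (frattini ↥M) := by
    have h1 : Nat.card (frattini G) * p ^ Group.rank G
        = Nat.card (frattini ↥M) * p ^ Group.rank ↥M * p := by
      rw [← hcG, hlagM, hcM]
    rw [hd] at h1
    have hr : Nat.card (frattini ↥M) * p ^ Group.rank ↥M * p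
        = Nat.card (frattini ↥M) * (p * p ^ Group.rank ↥M) := by ring
    rw [pow_add, pow_one, hr] at h1
    exact Nat.eq_of_mul_eq_mul_right (Nat.mul_pos hp.pos (Nat.pow_pos hp.pos)) h1
  have hNcard : Nat.card N = Nat.card (frattini ↥M) := by
    rw [Nat.card_congr (Subgroup.subgroupOfEquivOfLe hFM).toEquiv, hcards]
  have heq : frattini ↥M = N := by
    apply SetLike.ext'
    apply Set.eq_of_subset_of_ncard_le hsub ?_ (Set.toFinite _)
    rw [← Nat.card_coe_set_eq, ← Nat.card_coe_set_eq]
    exact le_of_eq hNcard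
  rw [heq, hN, Subgroup.subgroupOf_map_subtype, inf_eq_left.mpr hFM]
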